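/- Let G be a graph and x_0, ..., x_n an isometric path in G with n ≥ 2 (i.e., d_G(x_i, x_j) = |i - j| for all i, j). Then there exists a vertex x_{n+1} such that x_0, ..., x_n, x_{n+1} is an isometric path in G if and only if B_G(x_n, 1) is not contained in B_G(x_0, n). -/

import Mathlib

theorem stmt11 {V : Type*} (G : SimpleGraph V) (n : ℕ) (hn : 2 ≤ n) (x : ℕ → V)
    (hiso : ∀ i j : ℕ, i ≤ j → j ≤ n → G.edist (x i) (x j) = ((j - i : ℕ) : ℕ∞)) :
    (∃ y : V, ∀ i : ℕ, i ≤ n → G.edist (x i) y = ((n + 1 - i : ℕ) : ℕ∞)) ↔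
      ¬ ({y : V | G.edist (x n) y ≤ 1} ⊆ {y : V | G.edist (x 0) y ≤ (n : ℕ∞)}) := by
  constructor
  · rintro ⟨y, hy⟩ hsub
    have h1 := hy n le_rfl
    have h0 := hy 0 (Nat.zero_le n)
    have hmem : y ∈ {y : V | G.edist (x n) y ≤ 1} := by
      simp only [Set.mem_setOf_eq, h1]
      have : n + 1 - n = 1 := by omega
      rw [this]; exact_mod_cast le_rfl
    have h2 := hsub hmem
    simp only [Set.mem_setOf_eq, h0, Nat.sub_zero] at h2
    have := Nat.cast_le.mp h2
    omega
  · intro h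
    obtain ⟨y, hy1, hy2⟩ := Set.not_subset.mp h
    simp only [Set.mem_setOf_eq] at hy1 hy2
    have hn0 := hiso 0 n (Nat.zero_le n) le_rfl
    simp only [Nat.sub_zero] at hn0
    have hle : G.edist (x 0) y ≤ ((n + 1 : ℕ) : ℕ∞) := by
      calc G.edist (x 0) y ≤ G.edist (x 0) (x n) + G.edist (x n) y :=
            G.edist_triangle (v := x n)
        _ ≤ (n : ℕ∞) + 1 := by rw [hn0]; exact add_le_add le_rfl hy1
        _ = ((n + 1 : ℕ) : ℕ∞) := by push_cast; ring
    have heq : G.edist (x 0) y = ((n + 1 : ℕ) : ℕ∞) := by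
      refine le_antisymm hle ?_
      have hlt : (n : ℕ∞) < G.edist (x 0) y := not_le.mp hy2
      have := Order.add_one_le_of_lt hlt
      calc ((n + 1 : ℕ) : ℕ∞) = (n : ℕ∞) + 1 := by push_cast; ring
        _ ≤ G.edist (x 0) y := this
    refine ⟨y, fun i hi => ?_⟩
    have hin := hiso i n hi le_rfl
    have h0i := hiso 0 i (Nat.zero_le i) hi
    simp only [Nat.sub_zero] at h0i
    have hub : G.edist (x i) y ≤ ((n + 1 - i : ℕ) : ℕ∞) := by
      calc G.edist (x i) y ≤ G.edist (x i) (x n) + G.edist (x n) y :=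
            G.edist_triangle (v := x n)
        _ ≤ ((n - i : ℕ) : ℕ∞) + 1 := by rw [hin]; exact add_le_add le_rfl hy1
        _ = ((n + 1 - i : ℕ) : ℕ∞) := by
            have : n + 1 - i = (n - i) + 1 := by omega
            rw [this]; push_cast; ring
    have hlb : ((n + 1 : ℕ) : ℕ∞) ≤ ((i : ℕ) : ℕ∞) + G.edist (x i) y := by
      rw [← heq, ← h0i]
      exact G.edist_triangle (v := x i)
    have hne : G.edist (x i) y ≠ ⊤ := ne_top_of_le_ne_top (ENat.coe_ne_top _) hub
    lift G.edist (x i) y to ℕ using hne with m hm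
    rw [← Nat.cast_add, Nat.cast_le] at hlb
    rw [Nat.cast_le] at hub
    congr 1
    omega
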